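/- arXiv:1402.5012 — 4 statements merged into one kernel-verified Lean document; each statement's English description precedes it below -/
import Mathlib

section
/- Let K be an algebraically closed field of characteristic zero and n ≥ 1. If every injective Lie algebra endomorphism of VF(𝔸ⁿ) = Der_K(K[x₁,…,xₙ]) is bijective, then the Jacobian Conjecture holds in dimension n: every polynomial map φ = (f₁,…,fₙ) : 𝔸ⁿ → 𝔸ⁿ whose Jacobian determinant det(∂fᵢ/∂xⱼ) is a nonzero constant in K* is a polynomial automorphism; equivalently, every K-algebra endomorphism of K[x₁,…,xₙ] whose Jacobian determinant is a nonzero constant is a K-algebra automorphism. -/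
open MvPolynomial

/-- The Lie algebra `VF(𝔸ⁿ) = Der_K(K[x₁,…,xₙ])` of polynomial vector fields. -/
noncomputable abbrev VF (n : ℕ) (K : Type*) [Field K] :=
  Derivation K (MvPolynomial (Fin n) K) (MvPolynomial (Fin n) K)

namespace KulikovAux

variable {K : Type*} [Field K] [CharZero K] {n : ℕ}

omit [CharZero K] in
theorem sub_single_add {m : Fin n →₀ ℕ} {i : Fin n} (hi : m i ≠ 0) :
    m - Finsupp.single i 1 + Finsupp.single i 1 = m :=
  tsub_add_cancel_of_le (by rw [Finsupp.single_le_iff]; omega)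

omit [CharZero K] in
theorem coeff_pderiv (i : Fin n) (t : Fin n →₀ ℕ) (p : MvPolynomial (Fin n) K) :
    coeff t (pderiv i p) = (t i + 1 : ℕ) * coeff (t + Finsupp.single i 1) p := by
  induction p using MvPolynomial.induction_on' with
  | monomial s a =>
    rw [pderiv_monomial, coeff_monomial, coeff_monomial]
    by_cases h1 : s = t + Finsupp.single i 1
    · subst h1
      have h2 : t + Finsupp.single i 1 - Finsupp.single i 1 = t := by simp
      have h3 : (t + Finsupp.single i 1 : Fin n →₀ ℕ) i = t i + 1 := by
        rw [Finsupp.add_apply, Finsupp.single_eq_same]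
      rw [if_pos h2, if_pos rfl, h3]
      push_cast
      ring
    · rw [if_neg h1, mul_zero]
      by_cases h2 : s - Finsupp.single i 1 = t
      · have h3 : s i = 0 := by
          by_contra h3
          exact h1 (by rw [← h2, sub_single_add h3])
        rw [if_pos h2, h3]
        simp
      · rw [if_neg h2]
  | add p q hp hq => simp [hp, hq, mul_add]

theorem eq_C_of_pderiv_eq_zero {p : MvPolynomial (Fin n) K}
    (h : ∀ i, pderiv i p = 0) : p = C (coeff 0 p) := by
  ext m
  rw [coeff_C]
  by_cases hm : m = 0
  · subst hm; simp
  · rw [if_neg (Ne.symm hm)]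
    obtain ⟨i, hi⟩ : ∃ i, m i ≠ 0 := by
      by_contra hc
      push_neg at hc
      exact hm (Finsupp.ext hc)
    have h2 := coeff_pderiv i (m - Finsupp.single i 1) p
    rw [h i, sub_single_add hi] at h2
    simp only [coeff_zero] at h2
    have h3 : ((((m - Finsupp.single i 1 : Fin n →₀ ℕ)) i + 1 : ℕ) : K) ≠ 0 :=
      Nat.cast_ne_zero.mpr (Nat.succ_ne_zero _)
    exact (mul_eq_zero.mp h2.symm).resolve_left h3

omit [CharZero K] in
theorem totalDegree_pderiv_le (i : Fin n) (p : MvPolynomial (Fin n) K) (d : ℕ)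
    (h : p.totalDegree ≤ d + 1) : (pderiv i p).totalDegree ≤ d := by
  conv_lhs => rw [p.as_sum]
  rw [map_sum]
  refine (totalDegree_finset_sum _ _).trans (Finset.sup_le fun v hv => ?_)
  rw [pderiv_monomial]
  by_cases hvi : v i = 0
  · rw [hvi]; simp
  · refine (totalDegree_monomial_le _ _).trans ?_
    simp only [Function.id_def]
    have hsum : (v - Finsupp.single i 1).sum (fun _ e => e) + 1 = v.sum (fun _ e => e) := by
      conv_rhs => rw [← sub_single_add hvi]
      rw [Finsupp.sum_add_index' (fun _ => rfl) (fun _ _ _ => rfl),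
        Finsupp.sum_single_index rfl]
    have := le_totalDegree hv
    omega

omit [CharZero K] in
theorem eq_C_of_totalDegree_eq_zero {p : MvPolynomial (Fin n) K}
    (h : p.totalDegree = 0) : p = C (coeff 0 p) := by
  ext m
  rw [coeff_C]
  by_cases hm : m = 0
  · subst hm; simp
  · rw [if_neg (Ne.symm hm)]
    by_contra hc
    have hmem : m ∈ p.support := by rwa [MvPolynomial.mem_support_iff]
    exact hm (Finsupp.ext ((totalDegree_eq_zero_iff _ p).mp h m hmem))

omit [CharZero K] in
theorem deriv_expand (D : Derivation K (MvPolynomial (Fin n) K) (MvPolynomial (Fin n) K))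
    (p : MvPolynomial (Fin n) K) :
    D p = ∑ j, pderiv j p * D (X j) := by
  induction p using MvPolynomial.induction_on with
  | C a => rw [← MvPolynomial.algebraMap_eq, Derivation.map_algebraMap]; simp
  | add p q hp hq => simp [hp, hq, add_mul, Finset.sum_add_distrib]
  | mul_X p i hp =>
    have hs : ∑ j, p * pderiv j (X i) * D (X j) = p * D (X i) := by
      rw [Finset.sum_eq_single i]
      · simp
      · intro j _ hj; rw [pderiv_X_of_ne (Ne.symm hj)]; ring
      · intro h; exact absurd (Finset.mem_univ i) h
    have h2 : ∑ j, pderiv j (p * X i) * D (X j)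
        = ∑ j, pderiv j p * X i * D (X j) + ∑ j, p * pderiv j (X i) * D (X j) := by
      rw [← Finset.sum_add_distrib]
      refine Finset.sum_congr rfl fun j _ => ?_
      rw [pderiv_mul]; ring
    have h3 : ∑ j, pderiv j p * X i * D (X j) = X i * D p := by
      rw [hp, Finset.mul_sum]
      exact Finset.sum_congr rfl fun j _ => by ring
    rw [h2, h3, hs, D.leibniz]
    simp only [smul_eq_mul]
    ring

omit [CharZero K] in
theorem expand_phi (φ : MvPolynomial (Fin n) K →ₐ[K] MvPolynomial (Fin n) K)
    (E : Derivation K (MvPolynomial (Fin n) K) (MvPolynomial (Fin n) K))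
    (p : MvPolynomial (Fin n) K) :
    E (φ p) = ∑ i, φ (pderiv i p) * E (φ (X i)) := by
  rw [deriv_expand E (φ p)]
  have chain : ∀ j, pderiv j (φ p) = ∑ i, φ (pderiv i p) * pderiv j (φ (X i)) := by
    intro j
    induction p using MvPolynomial.induction_on with
    | C a =>
      rw [← MvPolynomial.algebraMap_eq, AlgHom.commutes, MvPolynomial.algebraMap_eq]
      simp
    | add p q hp hq => simp [hp, hq, add_mul, Finset.sum_add_distrib]
    | mul_X p i hp =>
      have hs : ∑ k, φ p * φ (pderiv k (X i)) * pderiv j (φ (X k)) =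
          φ p * pderiv j (φ (X i)) := by
        rw [Finset.sum_eq_single i]
        · simp
        · intro k _ hk; rw [pderiv_X_of_ne (Ne.symm hk)]; simp
        · intro h; exact absurd (Finset.mem_univ i) h
      have h2 : ∑ k, φ (pderiv k (p * X i)) * pderiv j (φ (X k))
          = ∑ k, φ (pderiv k p) * φ (X i) * pderiv j (φ (X k))
            + ∑ k, φ p * φ (pderiv k (X i)) * pderiv j (φ (X k)) := by
        rw [← Finset.sum_add_distrib]
        refine Finset.sum_congr rfl fun k _ => ?_
        rw [pderiv_mul, map_add, map_mul, map_mul]; ring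
      have h3 : ∑ k, φ (pderiv k p) * φ (X i) * pderiv j (φ (X k))
          = φ (X i) * pderiv j (φ p) := by
        rw [hp, Finset.mul_sum]
        exact Finset.sum_congr rfl fun k _ => by ring
      rw [map_mul, pderiv_mul, h2, h3, hs]
      ring
  calc ∑ j, pderiv j (φ p) * E (X j)
      = ∑ j, ∑ i, φ (pderiv i p) * pderiv j (φ (X i)) * E (X j) := by
        refine Finset.sum_congr rfl fun j _ => ?_
        rw [chain j, Finset.sum_mul]
    _ = ∑ i, φ (pderiv i p) * ∑ j, pderiv j (φ (X i)) * E (X j) := by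
        rw [Finset.sum_comm]
        refine Finset.sum_congr rfl fun i _ => ?_
        rw [Finset.mul_sum]
        exact Finset.sum_congr rfl fun j _ => by ring
    _ = ∑ i, φ (pderiv i p) * E (φ (X i)) := by
        refine Finset.sum_congr rfl fun i _ => ?_
        rw [← deriv_expand E (φ (X i))]

omit [CharZero K] in
theorem rep (φ : MvPolynomial (Fin n) K →ₐ[K] MvPolynomial (Fin n) K)
    (E D : Derivation K (MvPolynomial (Fin n) K) (MvPolynomial (Fin n) K))
    (hE : ∀ i, E (φ (X i)) = φ (D (X i))) (p : MvPolynomial (Fin n) K) :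
    E (φ p) = φ (D p) := by
  rw [expand_phi φ E p, deriv_expand D p, map_sum]
  refine Finset.sum_congr rfl fun i _ => ?_
  rw [hE i, map_mul]

/-- The Jacobian matrix of `φ`. -/
noncomputable def jac (φ : MvPolynomial (Fin n) K →ₐ[K] MvPolynomial (Fin n) K) :
    Matrix (Fin n) (Fin n) (MvPolynomial (Fin n) K) :=
  Matrix.of fun i j => pderiv j (φ (X i))

/-- The pullback of a derivation along `φ`. -/
noncomputable def theta0 (φ : MvPolynomial (Fin n) K →ₐ[K] MvPolynomial (Fin n) K)
    (D : Derivation K (MvPolynomial (Fin n) K) (MvPolynomial (Fin n) K)) :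
    Derivation K (MvPolynomial (Fin n) K) (MvPolynomial (Fin n) K) :=
  mkDerivation K ((jac φ)⁻¹.mulVec fun i => φ (D (X i)))

omit [CharZero K] in
theorem theta0_X (φ : MvPolynomial (Fin n) K →ₐ[K] MvPolynomial (Fin n) K)
    (D : Derivation K (MvPolynomial (Fin n) K) (MvPolynomial (Fin n) K)) (j : Fin n) :
    theta0 φ D (X j) = ((jac φ)⁻¹.mulVec fun i => φ (D (X i))) j :=
  mkDerivation_X _ _ _

end KulikovAux

open KulikovAux in
/-- **Kulikov.** If every injective Lie algebra endomorphism of `VF(𝔸ⁿ)` is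
bijective, then the Jacobian Conjecture holds in dimension `n`: every `K`-algebra
endomorphism of `K[x₁,…,xₙ]` whose Jacobian determinant is a nonzero constant is an
automorphism. -/
theorem kulikov_jacobian {K : Type*} [Field K] [IsAlgClosed K] [CharZero K]
    {n : ℕ} (hn : 1 ≤ n)
    (H : ∀ θ : VF n K →ₗ⁅K⁆ VF n K, Function.Injective θ → Function.Bijective θ) :
    ∀ φ : MvPolynomial (Fin n) K →ₐ[K] MvPolynomial (Fin n) K,
      (∃ c : K, c ≠ 0 ∧ (Matrix.of fun i j => pderiv j (φ (X i))).det = C c) →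
      Function.Bijective φ := by
  rintro φ ⟨c, hc, hdet0⟩
  have hdet : (jac φ).det = C c := hdet0
  have hJ : IsUnit (jac φ).det := by
    rw [hdet]
    exact IsUnit.of_mul_eq_one (C c⁻¹) (by rw [← C_mul, mul_inv_cancel₀ hc, map_one])
  have phiC : ∀ k : K, φ (C k) = C k := fun k => by
    rw [← MvPolynomial.algebraMap_eq, AlgHom.commutes]
  -- Injectivity of φ
  have key : ∀ (d : ℕ) (p : MvPolynomial (Fin n) K), p.totalDegree ≤ d → φ p = 0 → p = 0 := by
    intro d
    induction d with
    | zero =>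
      intro p hdeg hp
      have hC := eq_C_of_totalDegree_eq_zero (Nat.le_zero.mp hdeg)
      rw [hC, phiC] at hp
      rw [hC, C_eq_zero.mp hp, map_zero]
    | succ d ih =>
      intro p hdeg hp
      have hv : ∀ i, φ (pderiv i p) = 0 := by
        have h0 : Matrix.vecMul (fun i => φ (pderiv i p)) (jac φ) = 0 := by
          funext j
          have h1 := expand_phi φ (pderiv j) p
          rw [hp, map_zero] at h1
          simp only [Matrix.vecMul, dotProduct, Pi.zero_apply]
          exact h1.symm
        have h2 := congrArg (fun w => Matrix.vecMul w (jac φ)⁻¹) h0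
        simp only [Matrix.vecMul_vecMul] at h2
        rw [Matrix.mul_nonsing_inv _ hJ, Matrix.vecMul_one, Matrix.zero_vecMul] at h2
        exact fun i => congrFun h2 i
      have hpd : ∀ i, pderiv i p = 0 :=
        fun i => ih _ (totalDegree_pderiv_le i p d hdeg) (hv i)
      have hC := eq_C_of_pderiv_eq_zero hpd
      rw [hC, phiC] at hp
      rw [hC, C_eq_zero.mp hp, map_zero]
  have hinj : Function.Injective φ := by
    intro a b hab
    have h1 : φ (a - b) = 0 := by rw [map_sub, hab, sub_self]
    exact sub_eq_zero.mp (key (a - b).totalDegree (a - b) le_rfl h1)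
  -- θ₀ intertwines φ
  have hθX : ∀ (D : VF n K) (i : Fin n), theta0 φ D (φ (X i)) = φ (D (X i)) := by
    intro D i
    rw [deriv_expand (theta0 φ D) (φ (X i))]
    calc ∑ j, pderiv j (φ (X i)) * theta0 φ D (X j)
        = ∑ j, jac φ i j * ((jac φ)⁻¹.mulVec fun i => φ (D (X i))) j := by
          refine Finset.sum_congr rfl fun j _ => ?_
          rw [theta0_X]
          rfl
      _ = ((jac φ).mulVec ((jac φ)⁻¹.mulVec fun i => φ (D (X i)))) i := by
          simp only [Matrix.mulVec, dotProduct]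
      _ = φ (D (X i)) := by
          rw [Matrix.mulVec_mulVec, Matrix.mul_nonsing_inv _ hJ, Matrix.one_mulVec]
  have key2 : ∀ (D : VF n K) (p : MvPolynomial (Fin n) K), theta0 φ D (φ p) = φ (D p) :=
    fun D p => rep φ (theta0 φ D) D (hθX D) p
  -- Uniqueness of the intertwiner
  have uniq : ∀ (E D : VF n K), (∀ p, E (φ p) = φ (D p)) → E = theta0 φ D := by
    intro E D hE
    have h0 : ∀ i, (E - theta0 φ D) (φ (X i)) = 0 := by
      intro i
      rw [Derivation.sub_apply, hE, key2, sub_self]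
    have h1 : Matrix.mulVec (jac φ) (fun j => (E - theta0 φ D) (X j)) = 0 := by
      funext i
      have h2 := deriv_expand (E - theta0 φ D) (φ (X i))
      rw [h0 i] at h2
      simp only [Matrix.mulVec, dotProduct, Pi.zero_apply]
      exact h2.symm
    have h2 := congrArg (fun w => Matrix.mulVec (jac φ)⁻¹ w) h1
    simp only [Matrix.mulVec_mulVec] at h2
    rw [Matrix.nonsing_inv_mul _ hJ, Matrix.one_mulVec, Matrix.mulVec_zero] at h2
    have h3 : E - theta0 φ D = 0 := by
      apply MvPolynomial.derivation_ext
      intro i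
      simpa using congrFun h2 i
    exact sub_eq_zero.mp h3
  -- Assemble the Lie algebra endomorphism
  let θ : VF n K →ₗ⁅K⁆ VF n K :=
    { toFun := theta0 φ
      map_add' := fun D E => by
        refine (uniq (theta0 φ D + theta0 φ E) (D + E) fun p => ?_).symm
        rw [Derivation.add_apply, key2, key2, Derivation.add_apply, map_add]
      map_smul' := fun k D => by
        simp only [RingHom.id_apply]
        refine (uniq (k • theta0 φ D) (k • D) fun p => ?_).symm
        rw [Derivation.smul_apply, key2, Derivation.smul_apply, map_smul]
      map_lie' := fun {D E} => by
        refine (uniq ⁅theta0 φ D, theta0 φ E⁆ ⁅D, E⁆ fun p => ?_).symm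
        rw [Derivation.commutator_apply, key2 E p, key2 D (E p), key2 D p, key2 E (D p),
          Derivation.commutator_apply, map_sub] }
  have θinj : Function.Injective θ := by
    intro D E h
    have h0 : theta0 φ D = theta0 φ E := h
    refine DFunLike.ext _ _ fun p => hinj ?_
    rw [← key2 D p, ← key2 E p, h0]
  obtain ⟨-, θsurj⟩ := H θ θinj
  -- Surjectivity of φ
  have hmem : ∀ (E : VF n K) (a : MvPolynomial (Fin n) K),
      (∃ p, φ p = a) → ∃ q, φ q = E a := by
    rintro E a ⟨p, rfl⟩
    obtain ⟨D, hD⟩ := θsurj E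
    exact ⟨D p, by rw [← key2 D p, show theta0 φ D = E from hD]⟩
  have step : ∀ (b : MvPolynomial (Fin n) K) (j : Fin n) (g : MvPolynomial (Fin n) K),
      (∃ p, φ p = b) → ∃ q, φ q = g * pderiv j b := by
    intro b j g hb
    obtain ⟨q, hq⟩ := hmem (g • pderiv j) b hb
    exact ⟨q, by rw [hq, Derivation.smul_apply, smul_eq_mul]⟩
  have main : ∀ (d : ℕ) (b : MvPolynomial (Fin n) K), b ≠ 0 → b.totalDegree ≤ d →
      (∀ g, ∃ q, φ q = g * b) → ∀ g, ∃ q, φ q = g := by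
    intro d
    induction d with
    | zero =>
      intro b hb hdeg hgb g
      set k := coeff 0 b with hkdef
      have hC : b = C k := eq_C_of_totalDegree_eq_zero (Nat.le_zero.mp hdeg)
      have hk : k ≠ 0 := fun h => hb (by rw [hC, h, map_zero])
      obtain ⟨q, hq⟩ := hgb (g * C k⁻¹)
      refine ⟨q, ?_⟩
      rw [hq, hC, mul_assoc, ← C_mul, inv_mul_cancel₀ hk, map_one, mul_one]
    | succ d ih =>
      intro b hb hdeg hgb g
      by_cases h0 : ∀ i, pderiv i b = 0
      · set k := coeff 0 b with hkdef
        have hC : b = C k := eq_C_of_pderiv_eq_zero h0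
        have hk : k ≠ 0 := fun h => hb (by rw [hC, h, map_zero])
        obtain ⟨q, hq⟩ := hgb (g * C k⁻¹)
        refine ⟨q, ?_⟩
        rw [hq, hC, mul_assoc, ← C_mul, inv_mul_cancel₀ hk, map_one, mul_one]
      · push_neg at h0
        obtain ⟨j, hj⟩ := h0
        have hbmem : ∃ p, φ p = b := by
          obtain ⟨q, hq⟩ := hgb 1
          exact ⟨q, by rw [hq, one_mul]⟩
        exact ih (pderiv j b) hj (totalDegree_pderiv_le j b d hdeg)
          (fun g' => step b j g' hbmem) g
  have hex : ∃ i j, pderiv j (φ (X i)) ≠ 0 := by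
    by_contra hcon
    push_neg at hcon
    have hJ0 : jac φ = 0 := by
      refine Matrix.ext fun i j => ?_
      simp only [Matrix.zero_apply]
      exact hcon i j
    rw [hJ0, haveI : Nonempty (Fin n) := ⟨⟨0, hn⟩⟩; Matrix.det_zero] at hdet
    exact hc (C_eq_zero.mp hdet.symm)
  obtain ⟨i0, j0, hb0⟩ := hex
  have hsurj : Function.Surjective φ := fun g =>
    main (pderiv j0 (φ (X i0))).totalDegree (pderiv j0 (φ (X i0))) hb0 le_rfl
      (fun g' => step (φ (X i0)) j0 g' ⟨X i0, rfl⟩) g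
  exact ⟨hinj, hsurj⟩
end

section
/- Let K be a field of characteristic zero and n ≥ 1. Then VF⁰(𝔸ⁿ) = [VF^c(𝔸ⁿ), VF^c(𝔸ⁿ)], i.e. the divergence-free vector fields form exactly the derived subalgebra of the Lie algebra of vector fields with constant divergence. -/
open MvPolynomial

/-- The divergence of a polynomial vector field `δ = Σᵢ fᵢ ∂/∂xᵢ` (with `fᵢ = δ(xᵢ)`),
`Div δ = Σᵢ ∂fᵢ/∂xᵢ`. -/
noncomputable def divg {n : ℕ} {K : Type*} [Field K] (δ : VF n K) : MvPolynomial (Fin n) K :=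
  ∑ i, pderiv i (δ (X i))

/-- `VF^c(𝔸ⁿ)`, the set of polynomial vector fields of constant divergence. -/
def VFc (n : ℕ) (K : Type*) [Field K] : Set (VF n K) :=
  {δ | ∃ c : K, divg δ = C c}

section Aux
open Finset

variable {K : Type*} [Field K] {n : ℕ}

lemma Derivation.sum_apply' {R A M ι : Type*} [CommSemiring R] [CommSemiring A] [Algebra R A]
    [AddCommMonoid M] [Module R M] [Module A M] (s : Finset ι) (D : ι → Derivation R A M)
    (a : A) : (∑ i ∈ s, D i) a = ∑ i ∈ s, D i a := by
  classical
  induction s using Finset.induction with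
  | empty => simp
  | insert a s h ih => simp [Finset.sum_insert h, Derivation.add_apply, ih]

lemma pderiv_comm' (i j : Fin n) (f : MvPolynomial (Fin n) K) :
    pderiv i (pderiv j f) = pderiv j (pderiv i f) := by
  induction f using MvPolynomial.induction_on' with
  | monomial s a =>
    rcases eq_or_ne i j with rfl | hij
    · rfl
    · have h1 : (s - Finsupp.single j 1 : Fin n →₀ ℕ) i = s i := by
        simp [Finsupp.tsub_apply, Finsupp.single_eq_of_ne hij]
      have h2 : (s - Finsupp.single i 1 : Fin n →₀ ℕ) j = s j := by
        simp [Finsupp.tsub_apply, Finsupp.single_eq_of_ne (Ne.symm hij)]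
      simp only [pderiv_monomial, h1, h2]
      rw [tsub_right_comm]
      ring_nf
  | add p q hp hq => simp [hp, hq]

lemma deriv_apply (u : Derivation K (MvPolynomial (Fin n) K) (MvPolynomial (Fin n) K))
    (f : MvPolynomial (Fin n) K) :
    u f = ∑ j, pderiv j f * u (X j) := by
  have : u = ∑ j, (u (X j)) • (pderiv j : Derivation K (MvPolynomial (Fin n) K) _) := by
    apply MvPolynomial.derivation_ext
    intro i
    classical
    rw [Derivation.sum_apply']
    simp [Derivation.smul_apply, pderiv_X, Pi.single_apply, smul_eq_mul, eq_comm]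
  conv_lhs => rw [this]
  rw [Derivation.sum_apply']
  exact Finset.sum_congr rfl fun j _ => by
    rw [Derivation.smul_apply, smul_eq_mul, mul_comm]

noncomputable def divg' {n : ℕ} {K : Type*} [Field K]
    (δ : Derivation K (MvPolynomial (Fin n) K) (MvPolynomial (Fin n) K)) :
    MvPolynomial (Fin n) K := ∑ i, pderiv i (δ (X i))

lemma divg'_add (u v : Derivation K (MvPolynomial (Fin n) K) (MvPolynomial (Fin n) K)) :
    divg' (u + v) = divg' u + divg' v := by
  simp [divg', Derivation.add_apply, Finset.sum_add_distrib]

lemma divg'_smul (c : K) (u : Derivation K (MvPolynomial (Fin n) K) (MvPolynomial (Fin n) K)) :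
    divg' (c • u) = c • divg' u := by
  simp [divg', Derivation.smul_apply, Finset.smul_sum]

lemma pderiv_deriv (u : Derivation K (MvPolynomial (Fin n) K) (MvPolynomial (Fin n) K))
    (i : Fin n) (g : MvPolynomial (Fin n) K) :
    pderiv i (u g) = ∑ j, (pderiv i (pderiv j g) * u (X j) + pderiv j g * pderiv i (u (X j))) := by
  rw [deriv_apply u g, map_sum]
  exact Finset.sum_congr rfl fun j _ => pderiv_mul

lemma divg'_bracket_eq (u v : Derivation K (MvPolynomial (Fin n) K) (MvPolynomial (Fin n) K)) :
    divg' ⁅u, v⁆ = ∑ j, u (X j) * pderiv j (divg' v) - ∑ j, v (X j) * pderiv j (divg' u) := by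
  have key : ∀ w z : Derivation K (MvPolynomial (Fin n) K) (MvPolynomial (Fin n) K),
      ∑ i, pderiv i (w (z (X i))) =
        (∑ j, w (X j) * pderiv j (divg' z)) + ∑ i, ∑ j, pderiv j (z (X i)) * pderiv i (w (X j)) := by
    intro w z
    have : ∀ i : Fin n, pderiv i (w (z (X i))) =
        (∑ j, pderiv i (pderiv j (z (X i))) * w (X j)) +
          ∑ j, pderiv j (z (X i)) * pderiv i (w (X j)) := by
      intro i
      rw [pderiv_deriv, Finset.sum_add_distrib]
    rw [Finset.sum_congr rfl fun i _ => this i, Finset.sum_add_distrib]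
    congr 1
    rw [Finset.sum_comm]
    refine Finset.sum_congr rfl fun j _ => ?_
    rw [divg', map_sum, Finset.mul_sum, Finset.sum_congr rfl fun i _ => ?_]
    rw [pderiv_comm' i j (z (X i)), mul_comm]
  have hBsymm : ∑ i, ∑ j, pderiv j (v (X i)) * pderiv i (u (X j)) =
      ∑ i, ∑ j, pderiv j (u (X i)) * pderiv i (v (X j)) := by
    rw [Finset.sum_comm]
    exact Finset.sum_congr rfl fun i _ => Finset.sum_congr rfl fun j _ => mul_comm _ _
  have : divg' ⁅u, v⁆ = ∑ i, pderiv i (u (v (X i))) - ∑ i, pderiv i (v (u (X i))) := by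
    simp [divg', Derivation.commutator_apply, Finset.sum_sub_distrib]
  rw [this, key u v, key v u, hBsymm]
  ring

lemma divg'_bracket_eq_zero {u v : Derivation K (MvPolynomial (Fin n) K) (MvPolynomial (Fin n) K)}
    {a b : K} (hu : divg' u = C a) (hv : divg' v = C b) : divg' ⁅u, v⁆ = 0 := by
  rw [divg'_bracket_eq, hu, hv]
  simp [pderiv_C]

lemma degree_sub_single {s : Fin n →₀ ℕ} {i : Fin n} (h : s i ≠ 0) :
    (s - Finsupp.single i 1).degree + 1 = s.degree := by
  have hle : Finsupp.single i 1 ≤ s := Finsupp.single_le_iff.mpr (by omega)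
  have hs : (s - Finsupp.single i 1) + Finsupp.single i 1 = s := tsub_add_cancel_of_le hle
  have hdeg1 : (Finsupp.single i 1 : Fin n →₀ ℕ).degree = 1 := by
    rw [Finsupp.degree_apply, Finsupp.support_single_ne_zero _ one_ne_zero, Finset.sum_singleton,
      Finsupp.single_eq_same]
  calc (s - Finsupp.single i 1).degree + 1
      = (s - Finsupp.single i 1).degree + (Finsupp.single i 1 : Fin n →₀ ℕ).degree := by
        rw [hdeg1]
    _ = s.degree := by
        rw [show (Finsupp.degree (R := ℕ) (σ := Fin n)) = Finsupp.weight 1 from Finsupp.degree_eq_weight_one,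
          ← map_add, hs]

lemma homogComp_monomial (m : ℕ) (s : Fin n →₀ ℕ) (a : K) :
    homogeneousComponent m (monomial s a) =
      if s.degree = m then monomial s a else 0 := by
  ext t
  rw [coeff_homogeneousComponent, coeff_monomial]
  by_cases hst : s = t
  · subst hst
    split_ifs <;> simp_all [coeff_monomial]
  · rw [if_neg hst]
    split_ifs <;> simp [coeff_monomial, hst]

lemma pderiv_homogComp (i : Fin n) (d : ℕ) (f : MvPolynomial (Fin n) K) :
    pderiv i (homogeneousComponent (d + 1) f) = homogeneousComponent d (pderiv i f) := by
  induction f using MvPolynomial.induction_on' with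
  | monomial s a =>
    rw [homogComp_monomial, pderiv_monomial, homogComp_monomial]
    by_cases hsi : s i = 0
    · split_ifs <;> simp [pderiv_monomial, hsi]
    · have hd := degree_sub_single (i := i) hsi
      by_cases hdeg : s.degree = d + 1
      · rw [if_pos hdeg, if_pos (by omega), pderiv_monomial]
      · rw [if_neg hdeg, if_neg (by omega), map_zero]
  | add p q hp hq => simp [map_add, hp, hq]

lemma X_mul_pderiv_monomial (i : Fin n) (s : Fin n →₀ ℕ) (a : K) :
    X i * pderiv i (monomial s a) = (s i) • monomial s a := by
  rw [pderiv_monomial]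
  by_cases hsi : s i = 0
  · rw [hsi]; simp
  · have hle : Finsupp.single i 1 ≤ s := Finsupp.single_le_iff.mpr (by omega)
    rw [X, monomial_mul, one_mul, add_tsub_cancel_of_le hle]
    rw [smul_monomial]
    congr 1
    simp [nsmul_eq_mul, mul_comm]

lemma euler_identity {f : MvPolynomial (Fin n) K} {d : ℕ} (hf : f.IsHomogeneous d) :
    ∑ i, X i * pderiv i f = d • f := by
  have hsupp : ∀ m ∈ f.support, Finsupp.degree m = d := fun m hm => by
    rw [show (Finsupp.degree (R := ℕ) (σ := Fin n)) = Finsupp.weight 1 from Finsupp.degree_eq_weight_one]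
    exact hf (MvPolynomial.mem_support_iff.mp hm)
  conv_lhs => rw [f.as_sum]
  conv_rhs => rw [f.as_sum]
  rw [Finset.smul_sum]
  calc ∑ i, X i * pderiv i (∑ m ∈ f.support, monomial m (coeff m f))
      = ∑ i, ∑ m ∈ f.support, X i * pderiv i (monomial m (coeff m f)) := by
        refine Finset.sum_congr rfl fun i _ => ?_
        rw [map_sum, Finset.mul_sum]
    _ = ∑ m ∈ f.support, ∑ i, X i * pderiv i (monomial m (coeff m f)) := Finset.sum_comm
    _ = ∑ m ∈ f.support, d • monomial m (coeff m f) := by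
        refine Finset.sum_congr rfl fun m hm => ?_
        rw [Finset.sum_congr rfl fun i _ => X_mul_pderiv_monomial i m (coeff m f),
          ← Finset.sum_smul]
        congr 1
        rw [← hsupp m hm, Finsupp.degree_apply]
        exact (Finset.sum_subset (Finset.subset_univ _) (by
          intro x _ hx
          exact Finsupp.notMem_support_iff.mp hx)).symm

noncomputable def Eul (n : ℕ) (K : Type*) [Field K] :
    Derivation K (MvPolynomial (Fin n) K) (MvPolynomial (Fin n) K) :=
  mkDerivation K fun i => X i

lemma divg'_Eul : divg' (Eul n K) = C (n : K) := by
  simp only [divg', Eul, mkDerivation_X, pderiv_X_self]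
  rw [Finset.sum_const, Finset.card_univ, Fintype.card_fin]
  rw [nsmul_eq_mul, mul_one]
  exact (map_natCast (C : K →+* MvPolynomial (Fin n) K) n).symm

lemma bracket_Eul (δ : Derivation K (MvPolynomial (Fin n) K) (MvPolynomial (Fin n) K)) (d : ℕ)
    (hδ : ∀ i, (δ (X i)).IsHomogeneous d) :
    ⁅Eul n K, δ⁆ = ((d : K) - 1) • δ := by
  apply MvPolynomial.derivation_ext
  intro i
  rw [Derivation.commutator_apply, Derivation.smul_apply]
  rw [show (Eul n K) (X i) = X i from mkDerivation_X _ _ _]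
  have hE : (Eul n K) (δ (X i)) = d • δ (X i) := by
    rw [deriv_apply (Eul n K) (δ (X i))]
    rw [← euler_identity (hδ i)]
    exact Finset.sum_congr rfl fun j _ => by
      rw [show (Eul n K) (X j) = X j from mkDerivation_X _ _ _, mul_comm]
  rw [hE, sub_smul, one_smul, ← Nat.cast_smul_eq_nsmul K d (δ (X i))]

lemma divg'_mkDerivation_single (i : Fin n) (g : MvPolynomial (Fin n) K) :
    divg' (mkDerivation K (Pi.single i g)) = pderiv i g := by
  classical
  rw [divg']
  rw [Finset.sum_eq_single_of_mem i (Finset.mem_univ i)]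
  · rw [mkDerivation_X, Pi.single_eq_same]
  · intro j _ hj
    rw [mkDerivation_X, Pi.single_eq_of_ne hj, map_zero]

-- off-diagonal generator as bracket
lemma offdiag_bracket {i j : Fin n} (hij : i ≠ j) :
    ⁅mkDerivation K (Pi.single j (X j) : Fin n → MvPolynomial (Fin n) K),
        mkDerivation K (Pi.single i (X j) : Fin n → MvPolynomial (Fin n) K)⁆ =
      mkDerivation K (Pi.single i (X j) : Fin n → MvPolynomial (Fin n) K) := by
  classical
  apply MvPolynomial.derivation_ext
  intro k
  rw [Derivation.commutator_apply]
  by_cases hki : k = i <;> by_cases hkj : k = j <;>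
    simp_all [mkDerivation_X, Pi.single_apply]

lemma diag_bracket {i i₀ : Fin n} (hii : i ≠ i₀) :
    ⁅mkDerivation K (Pi.single i₀ (X i) : Fin n → MvPolynomial (Fin n) K),
        mkDerivation K (Pi.single i (X i₀) : Fin n → MvPolynomial (Fin n) K)⁆ =
      mkDerivation K (Pi.single i (X i) : Fin n → MvPolynomial (Fin n) K) -
        mkDerivation K (Pi.single i₀ (X i₀) : Fin n → MvPolynomial (Fin n) K) := by
  classical
  apply MvPolynomial.derivation_ext
  intro k
  rw [Derivation.commutator_apply, Derivation.sub_apply]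
  by_cases hki : k = i <;> by_cases hki0 : k = i₀ <;>
    simp_all [mkDerivation_X, Pi.single_apply]

lemma degree_one_single {m : Fin n →₀ ℕ} (h : m.degree = 1) : ∃ j, m = Finsupp.single j 1 := by
  classical
  have hcard : m.support.card ≤ 1 := by
    by_contra hc
    push_neg at hc
    have : 2 ≤ ∑ i ∈ m.support, m i := by
      calc 2 = 2 * 1 := by ring
        _ ≤ m.support.card * 1 := by omega
        _ ≤ ∑ i ∈ m.support, m i := by
          rw [← Finset.sum_const_nat fun x _ => rfl]
          exact Finset.sum_le_sum fun i hi => Nat.one_le_iff_ne_zero.mpr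
            (Finsupp.mem_support_iff.mp hi)
    rw [Finsupp.degree_apply] at h
    omega
  have hne : m.support.Nonempty := by
    rcases Finset.eq_empty_or_nonempty m.support with he | hne
    · exfalso; rw [Finsupp.degree_apply, he, Finset.sum_empty] at h; omega
    · exact hne
  have : m.support.card = 1 := le_antisymm hcard (Finset.card_pos.mpr hne)
  obtain ⟨j, hj⟩ := Finset.card_eq_one.mp this
  refine ⟨j, ?_⟩
  have hm := (Finsupp.support_eq_singleton.mp hj).2
  have : m j = 1 := by
    rw [Finsupp.degree_apply, hj, Finset.sum_singleton] at h
    exact h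
  rw [hm, this]

lemma homog_one_eq {g : MvPolynomial (Fin n) K} (hg : g.IsHomogeneous 1) :
    g = ∑ j, C (coeff (Finsupp.single j 1) g) * X j := by
  classical
  ext m
  rw [coeff_sum]
  by_cases hm : ∃ j, m = Finsupp.single j 1
  · obtain ⟨j0, rfl⟩ := hm
    rw [Finset.sum_eq_single_of_mem j0 (Finset.mem_univ j0)]
    · rw [coeff_C_mul, coeff_X', if_pos rfl, mul_one]
    · intro j _ hj
      rw [coeff_C_mul, coeff_X', if_neg, mul_zero]
      intro hcon
      exact hj (Finsupp.single_left_injective one_ne_zero hcon)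
  · have h0 : coeff m g = 0 := by
      by_contra hc
      have hdeg : m.degree = 1 := by
        rw [show (Finsupp.degree (R := ℕ) (σ := Fin n)) = Finsupp.weight 1 from
          Finsupp.degree_eq_weight_one]
        exact hg hc
      exact hm (degree_one_single hdeg)
    rw [h0]
    symm
    refine Finset.sum_eq_zero fun j _ => ?_
    rw [coeff_C_mul, coeff_X', if_neg, mul_zero]
    intro hcon
    exact hm ⟨j, hcon.symm⟩

lemma divg_eq {δ : VF n K} : divg δ = divg' δ := rfl

lemma linear_mem_span (hn : 1 ≤ n) (δ : VF n K) (h1 : ∀ i, (δ (X i)).IsHomogeneous 1)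
    (h0 : divg δ = 0) :
    δ ∈ Submodule.span K {x : VF n K | ∃ u ∈ VFc n K, ∃ v ∈ VFc n K, x = ⁅u, v⁆} := by
  classical
  set B : Fin n → Fin n → VF n K :=
    fun i j => mkDerivation K (Pi.single i (X j) : Fin n → MvPolynomial (Fin n) K) with hB
  set c : Fin n → Fin n → K := fun i j => coeff (Finsupp.single j 1) (δ (X i)) with hc
  have hval : ∀ i j k, B i j (X k) = if k = i then X j else 0 := by
    intro i j k
    rw [hB, mkDerivation_X, Pi.single_apply]
  -- decomposition
  have hdec : δ = ∑ i, ∑ j, c i j • B i j := by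
    apply MvPolynomial.derivation_ext
    intro k
    rw [Derivation.sum_apply']
    have : ∀ i, (∑ j, c i j • B i j) (X k) = if k = i then ∑ j, c i j • X j else 0 := by
      intro i
      rw [Derivation.sum_apply']
      rcases eq_or_ne k i with rfl | hki
      · rw [if_pos rfl]
        exact Finset.sum_congr rfl fun j _ => by
          rw [Derivation.smul_apply, hval]
          rw [if_pos rfl]
      · rw [if_neg hki]
        exact Finset.sum_eq_zero fun j _ => by
          rw [Derivation.smul_apply, hval, if_neg hki, smul_zero]
    rw [Finset.sum_congr rfl fun i _ => this i]
    simp only [Finset.sum_ite_eq, Finset.mem_univ, if_true]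
    rw [homog_one_eq (h1 k)]
    exact Finset.sum_congr rfl fun j _ => C_mul'
  -- trace zero
  have htr : ∑ i, c i i = 0 := by
    have hd : divg δ = ∑ i, C (c i i) := by
      rw [divg]
      refine Finset.sum_congr rfl fun i _ => ?_
      conv_lhs => rw [homog_one_eq (h1 i)]
      rw [map_sum, Finset.sum_congr rfl fun j _ => pderiv_C_mul]
      rw [Finset.sum_eq_single_of_mem i (Finset.mem_univ i)]
      · rw [pderiv_X_self, mul_one]
      · intro j _ hj
        rw [pderiv_X_of_ne hj, mul_zero]
    have hC : C (∑ i, c i i) = (C 0 : MvPolynomial (Fin n) K) := by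
      rw [map_sum, ← hd, h0, map_zero]
    exact C_injective _ _ hC
  
  have hmem_off : ∀ i j : Fin n, i ≠ j → B i j ∈
      Submodule.span K {x : VF n K | ∃ u ∈ VFc n K, ∃ v ∈ VFc n K, x = ⁅u, v⁆} := by
    intro i j hij
    apply Submodule.subset_span
    refine ⟨mkDerivation K (Pi.single j (X j) : Fin n → MvPolynomial (Fin n) K), ⟨1, ?_⟩,
      mkDerivation K (Pi.single i (X j) : Fin n → MvPolynomial (Fin n) K), ⟨0, ?_⟩,
      (offdiag_bracket hij).symm⟩
    · rw [divg_eq, divg'_mkDerivation_single, pderiv_X_self, map_one]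
    · rw [divg_eq, divg'_mkDerivation_single, pderiv_X_of_ne (Ne.symm hij)]
      exact (map_zero C).symm
  set i0 : Fin n := ⟨0, hn⟩ with hi0
  have hmem_diag : ∀ i : Fin n, B i i - B i0 i0 ∈
      Submodule.span K {x : VF n K | ∃ u ∈ VFc n K, ∃ v ∈ VFc n K, x = ⁅u, v⁆} := by
    intro i
    rcases eq_or_ne i i0 with rfl | hii
    · rw [sub_self]
      exact Submodule.zero_mem _
    · apply Submodule.subset_span
      refine ⟨mkDerivation K (Pi.single i0 (X i) : Fin n → MvPolynomial (Fin n) K), ⟨0, ?_⟩,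
        mkDerivation K (Pi.single i (X i0) : Fin n → MvPolynomial (Fin n) K), ⟨0, ?_⟩,
        (diag_bracket hii).symm⟩
      · rw [divg_eq, divg'_mkDerivation_single, pderiv_X_of_ne hii]
        exact (map_zero C).symm
      · rw [divg_eq, divg'_mkDerivation_single, pderiv_X_of_ne (Ne.symm hii)]
        exact (map_zero C).symm
  rw [hdec]
  have hsplit : ∀ i : Fin n, ∑ j, c i j • B i j =
      (∑ j ∈ Finset.univ.erase i, c i j • B i j) + c i i • B i i :=
    fun i => (Finset.sum_erase_add _ _ (Finset.mem_univ i)).symm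
  rw [Finset.sum_congr rfl fun i _ => hsplit i, Finset.sum_add_distrib]
  refine Submodule.add_mem _ ?_ ?_
  · refine Submodule.sum_mem _ fun i _ => Submodule.sum_mem _ fun j hj =>
      Submodule.smul_mem _ _ (hmem_off i j ?_)
    exact fun h => (Finset.mem_erase.mp hj).1 h.symm
  · have hTT : ∑ i, c i i • B i i = ∑ i, c i i • (B i i - B i0 i0) := by
      rw [Finset.sum_congr rfl fun i _ => smul_sub (c i i) (B i i) (B i0 i0),
        Finset.sum_sub_distrib, ← Finset.sum_smul, htr, zero_smul, sub_zero]
    rw [hTT]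
    exact Submodule.sum_mem _ fun i _ => Submodule.smul_mem _ _ (hmem_diag i)

end Aux

/-- `VF⁰(𝔸ⁿ) = [VF^c(𝔸ⁿ), VF^c(𝔸ⁿ)]`: the divergence-free vector fields
are exactly the derived subalgebra (the `K`-span of all brackets) of the Lie algebra of
vector fields with constant divergence. -/
theorem VF0_eq_derived_VFc {K : Type*} [Field K] [CharZero K] {n : ℕ} (hn : 1 ≤ n) :
    {δ : VF n K | divg δ = 0} =
      (Submodule.span K {x : VF n K | ∃ u ∈ VFc n K, ∃ v ∈ VFc n K, x = ⁅u, v⁆} :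
        Set (VF n K)) := by
  apply Set.eq_of_subset_of_subset
  · intro δ h0
    simp only [Set.mem_setOf_eq] at h0
    set N := Finset.univ.sup (fun i : Fin n => (δ (X i)).totalDegree) with hN
    set Δ : ℕ → VF n K := fun d => mkDerivation K (fun i => homogeneousComponent d (δ (X i)))
      with hΔ
    have hΔX : ∀ (d : ℕ) (i : Fin n), Δ d (X i) = homogeneousComponent d (δ (X i)) :=
      fun d i => mkDerivation_X _ _ _
    have hdecomp : δ = ∑ d ∈ Finset.range (N + 1), Δ d := by
      apply MvPolynomial.derivation_ext
      intro i
      rw [Derivation.sum_apply', Finset.sum_congr rfl fun d _ => hΔX d i]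
      have hle : (δ (X i)).totalDegree ≤ N := by
        rw [hN]
        exact Finset.le_sup (s := Finset.univ) (f := fun j => (δ (X j)).totalDegree) (Finset.mem_univ i)
      have hsub : Finset.range ((δ (X i)).totalDegree + 1) ⊆ Finset.range (N + 1) :=
        Finset.range_subset_range.mpr (Nat.succ_le_succ hle)
    -- δ (X i) = ∑ d ∈ range (N+1), homogeneousComponent d (δ (X i))
      conv_lhs => rw [← sum_homogeneousComponent (δ (X i))]
      refine Finset.sum_subset hsub fun d _ hd => ?_
      refine homogeneousComponent_eq_zero _ _ ?_
      rw [Finset.mem_range, not_lt] at hd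
      omega
    have hdiv : ∀ d, divg (Δ d) = 0 := by
      intro d
      rw [divg_eq]
      cases d with
      | zero =>
        refine Finset.sum_eq_zero fun i _ => ?_
        rw [hΔX, homogeneousComponent_zero, pderiv_C]
      | succ m =>
        rw [divg']
        rw [Finset.sum_congr rfl fun i _ => by rw [hΔX, pderiv_homogComp]]
        rw [← map_sum (homogeneousComponent m) _ Finset.univ,
          show ∑ i, pderiv i (δ (X i)) = divg δ from rfl, h0, map_zero]
    have hmem : ∀ d ∈ Finset.range (N + 1), Δ d ∈
        Submodule.span K {x : VF n K | ∃ u ∈ VFc n K, ∃ v ∈ VFc n K, x = ⁅u, v⁆} := by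
      intro d _
      rcases eq_or_ne d 1 with rfl | hd1
      · exact linear_mem_span hn (Δ 1)
          (fun i => by rw [hΔX]; exact homogeneousComponent_isHomogeneous 1 _) (hdiv 1)
      · have hbr := bracket_Eul (Δ d) d
          (fun i => by rw [hΔX]; exact homogeneousComponent_isHomogeneous d _)
        have hc : ((d : K) - 1) ≠ 0 :=
          sub_ne_zero.mpr fun hcon => hd1 (by exact_mod_cast hcon)
        have heq : Δ d = ((d : K) - 1)⁻¹ • ⁅Eul n K, Δ d⁆ := by
          rw [hbr, smul_smul, inv_mul_cancel₀ hc, one_smul]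
        rw [heq]
        refine Submodule.smul_mem _ _ (Submodule.subset_span
          ⟨Eul n K, ⟨(n : K), by rw [divg_eq]; exact divg'_Eul⟩, Δ d,
            ⟨0, by rw [hdiv d]; exact (map_zero C).symm⟩, rfl⟩)
    show δ ∈ Submodule.span K _
    rw [hdecomp]
    exact Submodule.sum_mem _ hmem
  · intro δ hδ
    have hδ' : δ ∈ Submodule.span K
        {x : VF n K | ∃ u ∈ VFc n K, ∃ v ∈ VFc n K, x = ⁅u, v⁆} := hδ
    clear hδ
    show divg δ = 0
    induction hδ' using Submodule.span_induction with
    | mem x hx =>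
      obtain ⟨u, ⟨a, hu⟩, v, ⟨b, hv⟩, rfl⟩ := hx
      rw [divg_eq]
      exact divg'_bracket_eq_zero (a := a) (b := b) hu hv
    | zero =>
      rw [divg_eq, divg']
      exact Finset.sum_eq_zero fun i _ => by rw [Derivation.zero_apply, map_zero]
    | add x y hx hy ihx ihy =>
      rw [divg_eq, divg'_add, ← divg_eq, ← divg_eq, ihx, ihy, add_zero]
    | smul a x hx ih =>
      rw [divg_eq, divg'_smul, ← divg_eq, ih, smul_zero]
end

section
/- Let K be a field of characteristic zero and n ≥ 1. If δ, μ ∈ VF(𝔸ⁿ) are commuting vector fields ([δ,μ] = 0), then for every polynomial f ∈ K[x₁,…,xₙ] one has [δ, f·μ] = δ(f)·μ. Consequently, if the adjoint operator ad(δ) : VF(𝔸ⁿ) → VF(𝔸ⁿ), ν ↦ [δ,ν], is locally nilpotent, then δ is a locally nilpotent derivation of K[x₁,…,xₙ]. -/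
open MvPolynomial

lemma bracket_smul_aux {K : Type*} [Field K] {n : ℕ} (δ μ : VF n K)
    (h : ⁅δ, μ⁆ = 0) (f : MvPolynomial (Fin n) K) : ⁅δ, f • μ⁆ = δ f • μ := by
  apply Derivation.ext
  intro g
  have h' : δ (μ g) - μ (δ g) = 0 := by
    have := congrArg (fun d : VF n K => d g) h
    simpa [Derivation.commutator_apply] using this
  simp only [Derivation.commutator_apply, Derivation.smul_apply, Derivation.leibniz,
    smul_eq_mul]
  linear_combination f * h'

lemma iterate_bracket_smul {K : Type*} [Field K] {n : ℕ} (δ : VF n K)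
    (f : MvPolynomial (Fin n) K) (m : ℕ) :
    (fun ρ : VF n K => ⁅δ, ρ⁆)^[m] (f • δ) =
      ((fun g : MvPolynomial (Fin n) K => δ g)^[m] f) • δ := by
  induction m with
  | zero => simp
  | succ m ih =>
    rw [Function.iterate_succ_apply', Function.iterate_succ_apply', ih,
      bracket_smul_aux δ δ (lie_self δ)]

/-- If `δ` and `μ` are commuting vector fields then `⁅δ, f·μ⁆ = δ(f)·μ`
for every polynomial `f`. Consequently, if the adjoint operator `ad(δ) = ⁅δ,·⁆` is locally
nilpotent on `VF(𝔸ⁿ)`, then `δ` is a locally nilpotent derivation of `K[x₁,…,xₙ]`. -/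
theorem bracket_smul_of_commute {K : Type*} [Field K] [CharZero K] {n : ℕ} (hn : 1 ≤ n)
    (δ μ : VF n K) (h : ⁅δ, μ⁆ = 0) :
    (∀ f : MvPolynomial (Fin n) K, ⁅δ, f • μ⁆ = δ f • μ) ∧
    ((∀ ν : VF n K, ∃ m : ℕ, (fun ρ : VF n K => ⁅δ, ρ⁆)^[m] ν = 0) →
      ∀ f : MvPolynomial (Fin n) K, ∃ m : ℕ,
        (fun g : MvPolynomial (Fin n) K => δ g)^[m] f = 0) := by
  refine ⟨fun f => bracket_smul_aux δ μ h f, fun hln f => ?_⟩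
  by_cases hδ : δ = 0
  · exact ⟨1, by simp [hδ]⟩
  · obtain ⟨m, hm⟩ := hln (f • δ)
    rw [iterate_bracket_smul] at hm
    refine ⟨m, ?_⟩
    by_contra hne
    obtain ⟨p, hp⟩ : ∃ p, δ p ≠ 0 := by
      by_contra hc
      push_neg at hc
      exact hδ (Derivation.ext fun q => by simp [hc q])
    have := congrArg (fun d : VF n K => d p) hm
    simp only [Derivation.smul_apply, Derivation.zero_apply, smul_eq_mul] at this
    rcases mul_eq_zero.mp this with h1 | h1
    · exact hne h1
    · exact hp h1
end

section
/- Let K be an algebraically closed field of characteristic zero and n ≥ 1. Let η : 𝔸ⁿ → 𝔸ⁿ be an étale morphism. If the pull-back map η* : VF(𝔸ⁿ) → VF(𝔸ⁿ) is bijective, then η is a polynomial automorphism of 𝔸ⁿ (i.e. its comorphism η^# is a K-algebra automorphism of K[x₁,…,xₙ]). -/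
open MvPolynomial

open MvPolynomial

section Aux

variable {σ K : Type*} [CommRing K]

lemma coeff_pderiv_aux [DecidableEq σ] (i : σ) (m : σ →₀ ℕ) (p : MvPolynomial σ K) :
    coeff m (pderiv i p) = ((m i : K) + 1) * coeff (m + Finsupp.single i 1) p := by
  induction p using MvPolynomial.induction_on' with
  | monomial s a =>
    rw [pderiv_monomial, coeff_monomial, coeff_monomial]
    by_cases h : s = m + Finsupp.single i 1
    · have hsi : s i = m i + 1 := by simp [h]
      have h2 : s - Finsupp.single i 1 = m := by
        ext j
        simp only [Finsupp.tsub_apply, Finsupp.add_apply, Finsupp.single_apply, h]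
        by_cases hji : i = j <;> simp [hji]
      simp [h2, h, hsi, mul_comm]
    · rw [if_neg h]
      by_cases hsi : s i = 0
      · by_cases h2 : s - Finsupp.single i 1 = m <;> simp [h2, hsi]
      · have h2 : ¬ (s - Finsupp.single i 1 = m) := by
          intro h2
          apply h
          ext j
          simp only [← h2, Finsupp.tsub_apply, Finsupp.add_apply, Finsupp.single_apply]
          by_cases hji : i = j
          · subst hji
            simp only [eq_self_iff_true, if_true]
            omega
          · simp [hji]
        simp [h2]
  | add p q hp hq =>
    simp [hp, hq, mul_add]

lemma totalDegree_pderiv_lt [CharZero K] {p : MvPolynomial σ K}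
    (hp : p.totalDegree ≠ 0) (i : σ) :
    (pderiv i p).totalDegree < p.totalDegree := by
  classical
  rcases Nat.pos_of_ne_zero hp with hpos
  rw [totalDegree, Finset.sup_lt_iff hpos]
  intro m hm
  rw [MvPolynomial.mem_support_iff, coeff_pderiv_aux] at hm
  have h1 : coeff (m + Finsupp.single i 1) p ≠ 0 := by
    intro h; apply hm; simp [h]
  have h2 : (m + Finsupp.single i 1) ∈ p.support := MvPolynomial.mem_support_iff.2 h1
  have h3 : (m + Finsupp.single i 1).sum (fun _ e => e) ≤ p.totalDegree :=
    MvPolynomial.le_totalDegree h2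
  have h4 : (m + Finsupp.single i 1).sum (fun _ e => e) = m.sum (fun _ e => e) + 1 := by
    rw [Finsupp.sum_add_index (by simp) (by simp)]
    simp
  omega

lemma exists_pderiv_ne_zero [IsDomain K] [CharZero K] {p : MvPolynomial σ K}
    (hp : p.totalDegree ≠ 0) : ∃ i, pderiv i p ≠ 0 := by
  classical
  have : ∃ m ∈ p.support, ∃ i, m i ≠ 0 := by
    by_contra hcon
    push_neg at hcon
    exact hp ((totalDegree_eq_zero_iff _ p).2 fun m hm x => hcon m hm x)
  obtain ⟨m, hm, i, hi⟩ := this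
  refine ⟨i, fun h0 => ?_⟩
  have := coeff_pderiv_aux i (m - Finsupp.single i 1) p
  rw [h0] at this
  have hms : (m - Finsupp.single i 1) + Finsupp.single i 1 = m := by
    ext j
    simp only [Finsupp.add_apply, Finsupp.tsub_apply, Finsupp.single_apply]
    by_cases hji : i = j
    · subst hji
      simp only [eq_self_iff_true, if_true]
      omega
    · simp [hji]
  rw [hms] at this
  have hc : coeff m p ≠ 0 := MvPolynomial.mem_support_iff.1 hm
  have hne : ∀ k : ℕ, (k : K) + 1 ≠ 0 := fun k => Nat.cast_add_one_ne_zero k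
  simp only [coeff_zero] at this
  exact hc (by
    rcases mul_eq_zero.1 this.symm with h | h
    · exact absurd h (hne _)
    · exact h)

lemma eq_C_of_totalDegree_eq_zero {p : MvPolynomial σ K} (hp : p.totalDegree = 0) :
    p = C (coeff 0 p) := by
  classical
  ext m
  rw [coeff_C]
  by_cases hm : m = 0
  · simp [hm]
  · rw [if_neg (Ne.symm hm)]
    by_contra hc
    have := (totalDegree_eq_zero_iff _ p).1 hp m (MvPolynomial.mem_support_iff.2 hc)
    exact hm (Finsupp.ext fun j => this j)

end Aux

/-- A polynomial map `η = (f₁,…,fₙ) : 𝔸ⁿ → 𝔸ⁿ` is étale if its Jacobian determinant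
`det(∂fᵢ/∂xⱼ)` is a nonzero constant. -/
def IsEtale {n : ℕ} {K : Type*} [Field K] (f : Fin n → MvPolynomial (Fin n) K) : Prop :=
  ∃ c : K, c ≠ 0 ∧ (Matrix.of fun i j => pderiv j (f i)).det = C c


lemma derivation_finset_sum_apply {n : ℕ} {K : Type*} [Field K]
    (s : Finset (Fin n)) (Ds : Fin n → VF n K) (a : MvPolynomial (Fin n) K) :
    (∑ j ∈ s, Ds j) a = ∑ j ∈ s, Ds j a := by
  classical
  induction s using Finset.induction_on with
  | empty => simp [Derivation.zero_apply]
  | insert _ _ hnot ih =>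
    rw [Finset.sum_insert hnot, Finset.sum_insert hnot, Derivation.add_apply, ih]

/-- If `η` is an étale morphism of `𝔸ⁿ` whose pull-back map
`η* : VF(𝔸ⁿ) → VF(𝔸ⁿ)` (characterized by `η*(δ) ∘ η^# = η^# ∘ δ`) is bijective, then `η`
is an automorphism of `𝔸ⁿ`, i.e. its comorphism `η^# = aeval f` is a `K`-algebra
automorphism. -/
theorem etale_with_bijective_pullback_is_auto {K : Type*} [Field K] [IsAlgClosed K]
    [CharZero K] {n : ℕ} (hn : 1 ≤ n)
    (f : Fin n → MvPolynomial (Fin n) K) (hf : IsEtale f)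
    (Φ : VF n K → VF n K)
    (hΦ : ∀ (δ : VF n K) (g : MvPolynomial (Fin n) K), Φ δ (aeval f g) = aeval f (δ g))
    (hbij : Function.Bijective Φ) :
    Function.Bijective (aeval (R := K) f :
      MvPolynomial (Fin n) K →ₐ[K] MvPolynomial (Fin n) K) := by
  classical
  constructor
  · -- injectivity
    rw [injective_iff_map_eq_zero]
    suffices H : ∀ d (g : MvPolynomial (Fin n) K), g.totalDegree ≤ d → aeval f g = 0 → g = 0 by
      intro g hg; exact H g.totalDegree g le_rfl hg
    intro d
    induction d with
    | zero =>
      intro g hgd hg0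
      rw [eq_C_of_totalDegree_eq_zero (Nat.le_zero.1 hgd)] at hg0 ⊢
      rw [aeval_C] at hg0
      have : coeff 0 g = 0 :=
        (map_eq_zero_iff (algebraMap K (MvPolynomial (Fin n) K))
          (algebraMap K (MvPolynomial (Fin n) K)).injective).1 hg0
      rw [this, map_zero]
    | succ d ih =>
      intro g hgd hg0
      by_cases h0 : g.totalDegree = 0
      · exact ih g (h0 ▸ Nat.zero_le d) hg0
      · have hker : ∀ i, aeval f (pderiv i g) = 0 := by
          intro i
          have h1 := hΦ (pderiv i) g
          rw [hg0] at h1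
          rw [← h1, map_zero]
        have hall : ∀ i, pderiv i g = 0 := fun i =>
          ih _ (Nat.lt_succ_iff.1 (lt_of_lt_of_le (totalDegree_pderiv_lt h0 i) hgd)) (hker i)
        obtain ⟨i, hi⟩ := exists_pderiv_ne_zero h0
        exact absurd (hall i) hi
  · -- surjectivity
    intro h
    obtain ⟨c, hc, hdet⟩ := hf
    set J : Matrix (Fin n) (Fin n) (MvPolynomial (Fin n) K) :=
      Matrix.of fun i j => pderiv j (f i) with hJdef
    have hu : IsUnit J.det := by
      rw [hdet]
      exact hc.isUnit.map (C : K →+* MvPolynomial (Fin n) K)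
    have hJinv : J * J⁻¹ = 1 := Matrix.mul_nonsing_inv J hu
    let i0 : Fin n := ⟨0, hn⟩
    set D : VF n K := ∑ j, (h * J⁻¹ j i0) • pderiv j with hDdef
    obtain ⟨δ, hδ⟩ := hbij.2 D
    refine ⟨δ (X i0), ?_⟩
    have h1 := hΦ δ (X i0)
    rw [hδ, aeval_X] at h1
    rw [← h1]
    -- compute D (f i0) = h
    have h2 : D (f i0) = ∑ j, (h * J⁻¹ j i0) * pderiv j (f i0) := by
      rw [hDdef, derivation_finset_sum_apply]
      exact Finset.sum_congr rfl fun j _ => by rw [Derivation.smul_apply, smul_eq_mul]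
    have h3 : (∑ j, (h * J⁻¹ j i0) * pderiv j (f i0)) = h * ∑ j, J i0 j * J⁻¹ j i0 := by
      rw [Finset.mul_sum]
      exact Finset.sum_congr rfl fun j _ => by
        rw [show pderiv j (f i0) = J i0 j from rfl]; ring
    have h4 : (∑ j, J i0 j * J⁻¹ j i0) = 1 := by
      have := congrArg (fun M : Matrix (Fin n) (Fin n) (MvPolynomial (Fin n) K) => M i0 i0) hJinv
      simpa [Matrix.mul_apply, Matrix.one_apply] using this
    rw [h2, h3, h4, mul_one]
end
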